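/- If a double rotation T is of finite type, i.e., Ω_N = Ω_{N+1} for some N, then the attractor Ω = Ω_N is a nonempty finite union of half-open intervals and T restricted to Ω maps Ω bijectively onto Ω. -/

import Mathlib

open MeasureTheory Set

namespace DRaux

def IsFU (S : Set ℝ) : Prop := ∃ s : Finset (ℝ × ℝ), S = ⋃ p ∈ s, Set.Ico p.1 p.2

lemma isFU_Ico (a b : ℝ) : IsFU (Set.Ico a b) := by
  exact ⟨{(a, b)}, by simp⟩

lemma IsFU.union {S S' : Set ℝ} (h : IsFU S) (h' : IsFU S') : IsFU (S ∪ S') := by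
  obtain ⟨s, rfl⟩ := h; obtain ⟨t, rfl⟩ := h'
  exact ⟨s ∪ t, by rw [Finset.set_biUnion_union]⟩

lemma IsFU.inter_Ico {S : Set ℝ} (h : IsFU S) (a b : ℝ) : IsFU (S ∩ Set.Ico a b) := by
  obtain ⟨s, rfl⟩ := h
  refine ⟨s.image (fun p => (max p.1 a, min p.2 b)), ?_⟩
  ext x
  simp only [Set.mem_inter_iff, Set.mem_iUnion, Finset.mem_image, Set.mem_Ico]
  constructor
  · rintro ⟨⟨p, hp, h1, h2⟩, ha, hb⟩
    exact ⟨_, ⟨p, hp, rfl⟩, by simp [h1, h2, ha, hb]⟩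
  · rintro ⟨q, ⟨p, hp, rfl⟩, h1, h2⟩
    simp only [max_le_iff, lt_min_iff] at h1 h2
    exact ⟨⟨p, hp, h1.1, h2.1⟩, h1.2, h2.2⟩

lemma IsFU.inter {S S' : Set ℝ} (h : IsFU S) (h' : IsFU S') : IsFU (S ∩ S') := by
  obtain ⟨t, rfl⟩ := h'
  classical
  induction t using Finset.induction with
  | empty => exact ⟨∅, by simp⟩
  | insert a t hx ih =>
    rw [Finset.set_biUnion_insert, Set.inter_union_distrib_left]
    exact (h.inter_Ico _ _).union ih

lemma IsFU.image_add {S : Set ℝ} (h : IsFU S) (t : ℝ) : IsFU ((fun x => x + t) '' S) := by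
  obtain ⟨s, rfl⟩ := h
  refine ⟨s.image (fun p => (p.1 + t, p.2 + t)), ?_⟩
  rw [Set.image_iUnion₂]
  ext x
  simp only [Set.mem_iUnion, Finset.mem_image]
  constructor
  · rintro ⟨p, hp, hx⟩
    exact ⟨(p.1 + t, p.2 + t), ⟨p, hp, rfl⟩, by rwa [Set.image_add_const_Ico] at hx⟩
  · rintro ⟨q, ⟨p, hp, rfl⟩, hx⟩
    exact ⟨p, hp, by rwa [Set.image_add_const_Ico]⟩

lemma IsFU.measurableSet {S : Set ℝ} (h : IsFU S) : MeasurableSet S := by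
  obtain ⟨s, rfl⟩ := h
  exact s.measurableSet_biUnion (fun p _ => measurableSet_Ico)

lemma IsFU.eq_empty_of_measure_zero {S : Set ℝ} (h : IsFU S) (h0 : volume S = 0) :
    S = ∅ := by
  obtain ⟨s, rfl⟩ := h
  rw [Set.eq_empty_iff_forall_notMem]
  intro x hx
  rw [Set.mem_iUnion₂] at hx
  obtain ⟨p, hp, hx⟩ := hx
  have h1 : volume (Set.Ico p.1 p.2) = 0 :=
    le_antisymm (h0 ▸ MeasureTheory.measure_mono (fun y hy => Set.mem_biUnion hp hy)) zero_le
  rw [Real.volume_Ico, ENNReal.ofReal_eq_zero] at h1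
  rw [Set.mem_Ico] at hx
  linarith [hx.1, hx.2]





/-- decomposition of the image of a subset of `[0,1)` under `x ↦ fract (x+γ)`. -/
lemma R_decomp (γ : ℝ) (hγ : γ ∈ Set.Ico (0:ℝ) 1) {A : Set ℝ}
    (hA : A ⊆ Set.Ico (0:ℝ) 1) :
    (fun x => Int.fract (x + γ)) '' A =
      ((fun x => x + γ) '' (A ∩ Set.Ico 0 (1 - γ))) ∪
        ((fun x => x + (γ - 1)) '' (A ∩ Set.Ico (1 - γ) 1)) := by
  have hsplit : A = (A ∩ Set.Ico 0 (1 - γ)) ∪ (A ∩ Set.Ico (1 - γ) 1) := by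
    rw [← Set.inter_union_distrib_left]
    rw [Set.Ico_union_Ico_eq_Ico (by linarith [hγ.2]) (by linarith [hγ.1])]
    exact (Set.inter_eq_left.mpr hA).symm
  conv_lhs => rw [hsplit]
  rw [Set.image_union]
  congr 1
  · apply Set.image_congr
    rintro x ⟨hxA, hx0, hx1⟩
    exact Int.fract_eq_self.mpr ⟨by linarith [hγ.1], by linarith⟩
  · apply Set.image_congr
    rintro x ⟨hxA, hx0, hx1⟩
    have h1 : (0:ℝ) ≤ x + (γ - 1) := by linarith
    have h2 : x + (γ - 1) < 1 := by linarith [hγ.2]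
    have : Int.fract (x + γ) = Int.fract (x + (γ - 1)) := by
      have : x + γ = (x + (γ - 1)) + 1 := by ring
      rw [this, Int.fract_add_one]
    rw [this, Int.fract_eq_self.mpr ⟨h1, h2⟩]

lemma R_maps (γ : ℝ) (A : Set ℝ) :
    (fun x => Int.fract (x + γ)) '' A ⊆ Set.Ico (0:ℝ) 1 := by
  rintro y ⟨x, _, rfl⟩
  exact ⟨Int.fract_nonneg _, Int.fract_lt_one _⟩

lemma R_injOn (γ : ℝ) : Set.InjOn (fun x => Int.fract (x + γ)) (Set.Ico (0:ℝ) 1) := by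
  rintro x ⟨hx0, hx1⟩ y ⟨hy0, hy1⟩ h
  simp only at h
  rw [Int.fract_eq_fract] at h
  obtain ⟨z, hz⟩ := h
  have hz' : x - y = (z : ℝ) := by linarith
  have h1 : (z : ℝ) < 1 := by rw [← hz']; linarith
  have h2 : (-1 : ℝ) < (z : ℝ) := by rw [← hz'] at *; linarith
  have hz0 : z = 0 := by
    have a1 : z < 1 := by exact_mod_cast h1
    have a2 : -1 < z := by exact_mod_cast h2
    omega
  rw [hz0] at hz'
  push_cast at hz'
  linarith [hz']

lemma volume_image_add (t : ℝ) (A : Set ℝ) :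
    volume ((fun x => x + t) '' A) = volume A := by
  rw [Set.image_add_right, measure_preimage_add_right]

lemma volume_R_image (γ : ℝ) (hγ : γ ∈ Set.Ico (0:ℝ) 1) {A : Set ℝ}
    (hA : A ⊆ Set.Ico (0:ℝ) 1) (hAm : MeasurableSet A) :
    volume ((fun x => Int.fract (x + γ)) '' A) = volume A := by
  rw [R_decomp γ hγ hA]
  have hd : Disjoint ((fun x => x + γ) '' (A ∩ Set.Ico 0 (1 - γ)))
      ((fun x => x + (γ - 1)) '' (A ∩ Set.Ico (1 - γ) 1)) := by
    rw [Set.disjoint_left]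
    rintro z ⟨x, ⟨_, _, hx1⟩, rfl⟩ ⟨y, ⟨_, hy0, _⟩, hy⟩
    simp only at hy
    linarith
  have hm2 : MeasurableSet ((fun x => x + (γ - 1)) '' (A ∩ Set.Ico (1 - γ) 1)) := by
    rw [Set.image_add_right]
    exact ((hAm.inter measurableSet_Ico)).preimage (measurable_add_const _)
  rw [measure_union hd hm2, volume_image_add, volume_image_add,
    ← measure_union ?_ (hAm.inter measurableSet_Ico), ← Set.inter_union_distrib_left,
    Set.Ico_union_Ico_eq_Ico (by linarith [hγ.2]) (by linarith [hγ.1]),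
    Set.inter_eq_left.mpr hA]
  rw [Set.disjoint_left]
  rintro z ⟨_, _, h1⟩ ⟨_, h2, _⟩
  linarith



lemma IsFU.image_R {γ : ℝ} (hγ : γ ∈ Set.Ico (0:ℝ) 1) {S : Set ℝ}
    (hS : S ⊆ Set.Ico (0:ℝ) 1) (h : IsFU S) :
    IsFU ((fun x => Int.fract (x + γ)) '' S) := by
  rw [R_decomp γ hγ hS]
  exact ((h.inter_Ico _ _).image_add _).union ((h.inter_Ico _ _).image_add _)

end DRaux

open DRaux MeasureTheory in
/-- If a double rotation `T` is of finite type, i.e. `Ω N = Ω (N+1)` for some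
`N`, then the attractor `Ω = ⋂_n Ω n` equals `Ω N`, is a nonempty finite union
of half-open intervals, and `T` restricted to it maps it bijectively onto
itself. -/
theorem double_rotation_finite_type_attractor
    (α β c : ℝ) (hα : α ∈ Set.Ico (0:ℝ) 1) (hβ : β ∈ Set.Ico (0:ℝ) 1)
    (hc : c ∈ Set.Ico (0:ℝ) 1)
    (T : ℝ → ℝ)
    (hT : ∀ y ∈ Set.Ico (0:ℝ) 1,
      T y = if y < c then Int.fract (y + α) else Int.fract (y + β))
    (Ω : ℕ → Set ℝ)
    (hΩ : ∀ n, Ω n = ⋂ k ∈ Finset.range (n + 1), T^[k] '' Set.Ico (0:ℝ) 1)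
    (N : ℕ) (hN : Ω N = Ω (N + 1)) :
    (⋂ n : ℕ, Ω n) = Ω N ∧
      (Ω N).Nonempty ∧
      (∃ s : Finset (ℝ × ℝ), Ω N = ⋃ p ∈ s, Set.Ico p.1 p.2) ∧
      Set.BijOn T (Ω N) (Ω N) := by
  set I : Set ℝ := Set.Ico (0:ℝ) 1 with hIdef
  -- image of a subset of I under T
  have hTI : ∀ S : Set ℝ, S ⊆ I → T '' S =
      ((fun x => Int.fract (x + α)) '' (S ∩ Set.Ico 0 c)) ∪
      ((fun x => Int.fract (x + β)) '' (S ∩ Set.Ico c 1)) := by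
    intro S hS
    have hsplit : S = (S ∩ Set.Ico 0 c) ∪ (S ∩ Set.Ico c 1) := by
      rw [← Set.inter_union_distrib_left,
        Set.Ico_union_Ico_eq_Ico hc.1 (le_of_lt hc.2)]
      exact (Set.inter_eq_left.mpr hS).symm
    conv_lhs => rw [hsplit]
    rw [Set.image_union]
    congr 1
    · apply Set.image_congr
      rintro x ⟨hxS, _, hxc⟩
      rw [hT x (hS hxS), if_pos hxc]
    · apply Set.image_congr
      rintro x ⟨hxS, hxc, _⟩
      rw [hT x (hS hxS), if_neg (not_lt.mpr hxc)]
  have hTsub : ∀ S : Set ℝ, S ⊆ I → T '' S ⊆ I := by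
    intro S hS
    rw [hTI S hS]
    exact Set.union_subset (R_maps α _) (R_maps β _)
  have hTFU : ∀ S : Set ℝ, S ⊆ I → IsFU S → IsFU (T '' S) := by
    intro S hS h
    rw [hTI S hS]
    exact ((h.inter_Ico 0 c).image_R hα (fun x hx => hS hx.1)).union
      ((h.inter_Ico c 1).image_R hβ (fun x hx => hS hx.1))
  have hiter : ∀ n, T^[n] '' I ⊆ I ∧ IsFU (T^[n] '' I) := by
    intro n
    induction n with
    | zero => exact ⟨by simp, by simpa using isFU_Ico 0 1⟩
    | succ n ih =>
      rw [Function.iterate_succ', Set.image_comp]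
      exact ⟨hTsub _ ih.1, hTFU _ ih.1 ih.2⟩
  have hanti : Antitone (fun n => T^[n] '' I) := by
    apply antitone_nat_of_succ_le
    intro n
    show T^[n+1] '' I ⊆ T^[n] '' I
    rw [Function.iterate_succ, Set.image_comp]
    exact Set.image_mono (hTsub I subset_rfl)
  have hΩ' : ∀ n, Ω n = T^[n] '' I := by
    intro n
    rw [hΩ]
    apply subset_antisymm
    · exact Set.biInter_subset_of_mem (Finset.self_mem_range_succ n)
    · intro x hx
      rw [Set.mem_iInter₂]
      intro k hk
      exact hanti (Nat.lt_succ_iff.mp (Finset.mem_range.mp hk)) hx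
  have hstep : ∀ m, Ω (m + 1) = T '' Ω m := by
    intro m
    rw [hΩ', hΩ', Function.iterate_succ', Set.image_comp]
  have hstab : ∀ n, N ≤ n → Ω n = Ω N := by
    intro n hn
    induction n, hn using Nat.le_induction with
    | base => rfl
    | succ n hn ih => rw [hstep, ih, ← hstep, ← hN]
  have hsubN : ∀ n, Ω N ⊆ Ω n := by
    intro n
    rcases le_or_gt n N with h | h
    · rw [hΩ', hΩ']
      exact hanti h
    · rw [hstab n h.le]
  -- the four conclusions
  have hS1 : Ω N ⊆ I := by rw [hΩ']; exact (hiter N).1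
  have hFU : IsFU (Ω N) := by rw [hΩ']; exact (hiter N).2
  have hTS : T '' Ω N = Ω N := by rw [← hstep, ← hN]
  refine ⟨subset_antisymm (Set.iInter_subset _ N) (Set.subset_iInter hsubN), ?_, hFU, ?_⟩
  · rw [hΩ']
    exact (Set.nonempty_Ico.mpr one_pos).image _
  -- BijOn
  set S1 : Set ℝ := Ω N ∩ Set.Ico 0 c with hS1def
  set S2 : Set ℝ := Ω N ∩ Set.Ico c 1 with hS2def
  set B1 : Set ℝ := (fun x => Int.fract (x + α)) '' S1 with hB1def
  set B2 : Set ℝ := (fun x => Int.fract (x + β)) '' S2 with hB2def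
  have hBU : B1 ∪ B2 = Ω N := by rw [← hTI _ hS1, hTS]
  have hS1I : S1 ⊆ I := fun x hx => hS1 hx.1
  have hS2I : S2 ⊆ I := fun x hx => hS1 hx.1
  have hS1m : MeasurableSet S1 := hFU.measurableSet.inter measurableSet_Ico
  have hS2m : MeasurableSet S2 := hFU.measurableSet.inter measurableSet_Ico
  have hB1FU : IsFU B1 := (hFU.inter_Ico 0 c).image_R hα hS1I
  have hB2FU : IsFU B2 := (hFU.inter_Ico c 1).image_R hβ hS2I
  have hsplitS : S1 ∪ S2 = Ω N := by
    rw [← Set.inter_union_distrib_left,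
      Set.Ico_union_Ico_eq_Ico hc.1 (le_of_lt hc.2)]
    exact Set.inter_eq_left.mpr hS1
  have hdisj : Disjoint S1 S2 := by
    rw [Set.disjoint_left]
    rintro x ⟨_, _, h1⟩ ⟨_, h2, _⟩
    linarith
  have hvolS : volume (Ω N) = volume S1 + volume S2 := by
    rw [← hsplitS, measure_union hdisj hS2m]
  have hfin : volume (Ω N) ≠ ⊤ := by
    refine ne_top_of_le_ne_top ?_ (measure_mono hS1)
    simp [hIdef, Real.volume_Ico]
  have hkey : volume (B1 ∩ B2) = 0 := by
    have h1 : volume (B1 ∪ B2) + volume (B1 ∩ B2) = volume B1 + volume B2 :=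
      measure_union_add_inter B1 hB2FU.measurableSet
    rw [hBU, volume_R_image α hα hS1I hS1m, volume_R_image β hβ hS2I hS2m,
      ← hvolS] at h1
    exact (ENNReal.add_right_inj hfin).mp (by rw [add_zero]; exact h1)
  have hBempty : B1 ∩ B2 = ∅ :=
    (hB1FU.inter hB2FU).eq_empty_of_measure_zero hkey
  constructor
  · -- MapsTo
    intro x hx
    rw [← hTS]
    exact Set.mem_image_of_mem T hx
  constructor
  · -- InjOn
    intro x hx y hy hxy
    have hxI := hS1 hx
    have hyI := hS1 hy
    by_cases hxc : x < c <;> by_cases hyc : y < c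
    · refine R_injOn α hxI hyI ?_
      have e1 : T x = Int.fract (x + α) := by rw [hT x hxI, if_pos hxc]
      have e2 : T y = Int.fract (y + α) := by rw [hT y hyI, if_pos hyc]
      show Int.fract (x + α) = Int.fract (y + α)
      rw [← e1, ← e2]; exact hxy
    · exfalso
      have h1 : T x ∈ B1 := ⟨x, ⟨hx, hxI.1, hxc⟩, by rw [hT x hxI, if_pos hxc]⟩
      have h2 : T y ∈ B2 :=
        ⟨y, ⟨hy, not_lt.mp hyc, hyI.2⟩, by rw [hT y hyI, if_neg hyc]⟩
      rw [hxy] at h1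
      exact absurd (hBempty ▸ Set.mem_inter h1 h2) (Set.notMem_empty _)
    · exfalso
      have h1 : T y ∈ B1 := ⟨y, ⟨hy, hyI.1, hyc⟩, by rw [hT y hyI, if_pos hyc]⟩
      have h2 : T x ∈ B2 :=
        ⟨x, ⟨hx, not_lt.mp hxc, hxI.2⟩, by rw [hT x hxI, if_neg hxc]⟩
      rw [← hxy] at h1
      exact absurd (hBempty ▸ Set.mem_inter h1 h2) (Set.notMem_empty _)
    · refine R_injOn β hxI hyI ?_
      have e1 : T x = Int.fract (x + β) := by rw [hT x hxI, if_neg hxc]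
      have e2 : T y = Int.fract (y + β) := by rw [hT y hyI, if_neg hyc]
      show Int.fract (x + β) = Int.fract (y + β)
      rw [← e1, ← e2]; exact hxy
  · -- SurjOn
    intro y hy
    rw [← hTS] at hy
    exact hy
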